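/- Existence of a minimal decisive singleton: for a social welfare function satisfying Pareto and IIA on at least 3 alternatives with finitely many individuals, there exists an individual i such that {i} is a decisive coalition. -/

import Mathlib

set_option maxHeartbeats 1000000


/-- A strict linear order (complete, transitive, irreflexive preference) on `X`. -/
def SLO (X : Type*) : Type _ := {r : X → X → Prop // IsStrictTotalOrder X r}

/-- Pareto: unanimous strict preference is replicated socially. -/
def Pareto {X ι : Type*} (f : (ι → SLO X) → SLO X) : Prop :=
  ∀ P : ι → SLO X, ∀ a b : X, (∀ i, (P i).1 a b) → (f P).1 a b

/-- Independence of irrelevant alternatives. -/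
def IIA {X ι : Type*} (f : (ι → SLO X) → SLO X) : Prop :=
  ∀ P P' : ι → SLO X, ∀ a b : X,
    (∀ i, (P i).1 a b ↔ (P' i).1 a b) → ((f P).1 a b ↔ (f P').1 a b)

/-- A coalition `D` is `(a,b)`-decisive. -/
def PairDecisive {X ι : Type*} (f : (ι → SLO X) → SLO X) (D : Set ι) (a b : X) : Prop :=
  ∀ P : ι → SLO X, (∀ i ∈ D, (P i).1 a b) → (f P).1 a b

/-- A coalition is decisive if it is `(a,b)`-decisive for all distinct `a, b`. -/
def Decisive {X ι : Type*} (f : (ι → SLO X) → SLO X) (D : Set ι) : Prop :=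
  ∀ a b : X, a ≠ b → PairDecisive f D a b

/-- `d` is a dictator for `f`. -/
def IsDictator {X ι : Type*} (f : (ι → SLO X) → SLO X) (d : ι) : Prop :=
  ∀ P : ι → SLO X, ∀ a b : X, (P d).1 a b → (f P).1 a b

section Aux
variable {X ι : Type*} [Fintype X]

noncomputable def baseR (X : Type*) [Fintype X] : X → ℕ := fun x => ((Fintype.equivFin X) x : ℕ)

lemma baseR_lt (x : X) : baseR X x < Fintype.card X := ((Fintype.equivFin X) x).2

lemma baseR_inj : Function.Injective (baseR X) := fun x y h =>
  (Fintype.equivFin X).injective (Fin.val_injective h)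

noncomputable def mkSLO (p : X → ℕ) (hp : Function.Injective p) : SLO X :=
  ⟨fun x y => p y < p x,
   { irrefl := fun _ => lt_irrefl _
     trans := fun _ _ _ h1 h2 => lt_trans h2 h1
     trichotomous := fun a b h1 h2 => by
        rcases lt_trichotomy (p b) (p a) with h|h|h
        · exact absurd h h1
        · exact hp h.symm
        · exact absurd h h2 }⟩

omit [Fintype X] in
lemma mkSLO_iff (p : X → ℕ) (hp : Function.Injective p) (x y : X) :
    (mkSLO p hp).1 x y ↔ p y < p x := Iff.rfl

open Classical in
noncomputable def step (a b c : X) (v1 v2 v3 : ℕ) : X → ℕ :=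
  fun x => if x = a then v1 else if x = b then v2 else if x = c then v3 else baseR X x

lemma step_inj {a b c : X} (hab : a ≠ b) (hac : a ≠ c) (hbc : b ≠ c)
    {v1 v2 v3 : ℕ} (h1 : Fintype.card X ≤ v1) (h2 : Fintype.card X ≤ v2)
    (h3 : Fintype.card X ≤ v3) (h12 : v1 ≠ v2) (h13 : v1 ≠ v3) (h23 : v2 ≠ v3) :
    Function.Injective (step a b c v1 v2 v3) := by
  intro x y hxy
  have bx := baseR_lt x
  have by' := baseR_lt y
  unfold step at hxy
  by_cases hxa : x = a <;> by_cases hya : y = a <;> by_cases hxb : x = b <;>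
    by_cases hyb : y = b <;> by_cases hxc : x = c <;> by_cases hyc : y = c <;>
    simp_all <;> first
      | omega
      | (exact baseR_inj hxy)

omit [Fintype X] in
lemma SLO.trans' (r : SLO X) {x y z : X} (h1 : r.1 x y) (h2 : r.1 y z) : r.1 x z :=
  r.2.toIsStrictOrder.toIsTrans.trans _ _ _ h1 h2

omit [Fintype X] in
lemma SLO.asymm' (r : SLO X) {x y : X} (h1 : r.1 x y) : ¬ r.1 y x := fun h2 =>
  r.2.toIsStrictOrder.toIrrefl.irrefl x (r.trans' h1 h2)

omit [Fintype X] in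
lemma SLO.total' (r : SLO X) {x y : X} (hne : x ≠ y) (h : ¬ r.1 x y) : r.1 y x := by
  rcases (haveI := r.2; trichotomous_of r.1 x y) with h1 | h1 | h1
  · exact absurd h1 h
  · exact absurd h1 hne
  · exact h1

lemma exists_third (hX : 3 ≤ Fintype.card X) (a b : X) : ∃ c : X, c ≠ a ∧ c ≠ b := by
  classical
  by_contra h
  push_neg at h
  have hsub : (Finset.univ : Finset X) ⊆ {a, b} := by
    intro x _
    rcases Classical.em (x = a) with h1 | h1
    · simp [h1]
    · simp [h x h1]
  have := Finset.card_le_card hsub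
  have h2 : ({a, b} : Finset X).card ≤ 2 := Finset.card_insert_le _ _ |>.trans (by simp)
  simp [Finset.card_univ] at this
  omega

def WeakDec (f : (ι → SLO X) → SLO X) (D : Set ι) (a b : X) : Prop :=
  ∀ P : ι → SLO X, (∀ i ∈ D, (P i).1 a b) → (∀ i ∉ D, (P i).1 b a) → (f P).1 a b

omit [Fintype X] in
lemma pd_wd {f : (ι → SLO X) → SLO X} {D : Set ι} {a b : X}
    (h : PairDecisive f D a b) : WeakDec f D a b := fun P h1 _ => h P h1

variable {f : (ι → SLO X) → SLO X}

lemma spread (hP : Pareto f) (hI : IIA f) {D : Set ι} {a b c : X}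
    (hab : a ≠ b) (hca : c ≠ a) (hcb : c ≠ b) (h : WeakDec f D a b) :
    PairDecisive f D a c ∧ PairDecisive f D c b := by
  classical
  set n := Fintype.card X with hn
  have hba := hab.symm
  have hac := hca.symm
  have hbc := hcb.symm
  constructor
  · -- PairDecisive f D a c
    intro P hD
    have hpD : Function.Injective (step a b c (n+2) (n+1) n) :=
      step_inj hab hac hbc (by omega) (by omega) (by omega) (by omega) (by omega) (by omega)
    have hpO : ∀ i : ι, Function.Injective (step b a c (n+2)
        (if (P i).1 a c then n+1 else n) (if (P i).1 a c then n else n+1)) := fun i =>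
      step_inj hba hbc hac (by omega) (by split_ifs <;> omega) (by split_ifs <;> omega)
        (by split_ifs <;> omega) (by split_ifs <;> omega) (by split_ifs <;> omega)
    set P' : ι → SLO X := fun i => if i ∈ D then mkSLO _ hpD else mkSLO _ (hpO i) with hP'
    have hsoc_ab : (f P').1 a b := by
      apply h P'
      · intro i hi
        simp [hP', hi, mkSLO_iff, step, hba, hca, hcb]
      · intro i hi
        simp [hP', hi, mkSLO_iff, step, hab, hca, hcb]
        split_ifs <;> omega
    have hsoc_bc : (f P').1 b c := by
      apply hP P' b c
      intro i
      by_cases hi : i ∈ D <;> simp [hP', hi, mkSLO_iff, step, hba, hab, hca, hcb] <;>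
        split_ifs <;> omega
    have hsoc_ac : (f P').1 a c := (f P').trans' hsoc_ab hsoc_bc
    have agree : ∀ i, (P i).1 a c ↔ (P' i).1 a c := by
      intro i
      by_cases hi : i ∈ D
      · simp only [hP', hi, if_pos, mkSLO_iff]
        simp [step, hba, hca, hcb, hab]
        exact hD i hi
      · by_cases hpi : (P i).1 a c <;>
          simp [hP', hi, hpi, mkSLO_iff, step, hab, hca, hcb]
    exact (hI P P' a c agree).mpr hsoc_ac
  · -- PairDecisive f D c b
    intro P hD
    have hpD : Function.Injective (step c a b (n+2) (n+1) n) :=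
      step_inj hca hcb hab (by omega) (by omega) (by omega) (by omega) (by omega) (by omega)
    have hpO : ∀ i : ι, Function.Injective (step c b a
        (if (P i).1 c b then n+2 else n+1) (if (P i).1 c b then n+1 else n+2) n) := fun i =>
      step_inj hcb hca hba (by split_ifs <;> omega) (by split_ifs <;> omega) (by omega)
        (by split_ifs <;> omega) (by split_ifs <;> omega) (by split_ifs <;> omega)
    set P' : ι → SLO X := fun i => if i ∈ D then mkSLO _ hpD else mkSLO _ (hpO i) with hP'
    have hsoc_ab : (f P').1 a b := by
      apply h P'
      · intro i hi
        simp [hP', hi, mkSLO_iff, step, hac, hba, hbc]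
      · intro i hi
        simp [hP', hi, mkSLO_iff, step, hab, hbc, hac]
        split_ifs <;> omega
    have hsoc_ca : (f P').1 c a := by
      apply hP P' c a
      intro i
      by_cases hi : i ∈ D <;> simp [hP', hi, mkSLO_iff, step, hac, hba, hbc, hab] <;>
        split_ifs <;> omega
    have hsoc_cb : (f P').1 c b := (f P').trans' hsoc_ca hsoc_ab
    have agree : ∀ i, (P i).1 c b ↔ (P' i).1 c b := by
      intro i
      by_cases hi : i ∈ D
      · simp only [hP', hi, if_pos, mkSLO_iff]
        simp [step, hac, hba, hbc]
        exact hD i hi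
      · by_cases hpi : (P i).1 c b <;>
          simp [hP', hi, hpi, mkSLO_iff, step, hbc, hba, hac]
    exact (hI P P' c b agree).mpr hsoc_cb

lemma wd_decisive (hX : 3 ≤ Fintype.card X) (hP : Pareto f) (hI : IIA f)
    {D : Set ι} {a b : X} (hab : a ≠ b) (h : WeakDec f D a b) : Decisive f D := by
  classical
  have key : ∀ a b : X, a ≠ b → WeakDec f D a b → ∀ c : X, c ≠ a → c ≠ b →
      PairDecisive f D a c ∧ PairDecisive f D c b := fun a b hab h c h1 h2 =>
    spread hP hI hab h1 h2 h
  obtain ⟨c, hca, hcb⟩ := exists_third hX a b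
  have s1 := key a b hab h c hca hcb
  have wd_cb : WeakDec f D c b := pd_wd s1.2
  have s2 := key c b hcb wd_cb a (Ne.symm hca) hab
  have wd_ca : WeakDec f D c a := pd_wd s2.1
  have s3 := key c a hca wd_ca b (Ne.symm hcb) (Ne.symm hab)
  have wd_ba : WeakDec f D b a := pd_wd s3.2
  intro x y hxy
  by_cases hxa : x = a
  · subst hxa
    by_cases hyb : y = b
    · subst hyb; exact s2.2
    · exact (key x b hab h y (Ne.symm hxy) hyb).1
  · by_cases hxb : x = b
    · subst hxb
      by_cases hya : y = a
      · subst hya; exact s3.2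
      · exact (key x a (Ne.symm hab) wd_ba y (Ne.symm hxy) hya).1
    · by_cases hya : y = a
      · subst hya
        exact (key b y (Ne.symm hab) wd_ba x hxb hxa).2
      · by_cases hyb : y = b
        · subst hyb
          exact (key a y hab h x hxa hxb).2
        · have wd_ay : WeakDec f D a y := pd_wd (key a b hab h y hya hyb).1
          exact (key a y (Ne.symm hya) wd_ay x hxa hxy).2

lemma split_dec (hX : 3 ≤ Fintype.card X) (hP : Pareto f) (hI : IIA f)
    {D1 D2 : Set ι} (hdisj : ∀ i, i ∈ D1 → i ∉ D2)
    (hdec : Decisive f (D1 ∪ D2)) : Decisive f D1 ∨ Decisive f D2 := by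
  classical
  set n := Fintype.card X with hn
  obtain ⟨a, b, hab⟩ := Fintype.exists_pair_of_one_lt_card (α := X) (by omega)
  obtain ⟨c, hca, hcb⟩ := exists_third hX a b
  have hba := hab.symm
  have hac := hca.symm
  have hbc := hcb.symm
  have hp1 : Function.Injective (step a b c (n+2) (n+1) n) :=
    step_inj hab hac hbc (by omega) (by omega) (by omega) (by omega) (by omega) (by omega)
  have hp2 : Function.Injective (step b c a (n+2) (n+1) n) :=
    step_inj hbc hba hca (by omega) (by omega) (by omega) (by omega) (by omega) (by omega)
  have hp3 : Function.Injective (step c a b (n+2) (n+1) n) :=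
    step_inj hca hcb hab (by omega) (by omega) (by omega) (by omega) (by omega) (by omega)
  set P : ι → SLO X := fun i => if i ∈ D1 then mkSLO _ hp1 else
    if i ∈ D2 then mkSLO _ hp2 else mkSLO _ hp3 with hPdef
  have hsoc_bc : (f P).1 b c := by
    apply hdec b c hbc P
    intro i hi
    by_cases h1 : i ∈ D1
    · simp [hPdef, h1, mkSLO_iff, step, hba, hca, hcb]
    · have h2 : i ∈ D2 := hi.resolve_left h1
      simp [hPdef, h1, h2, mkSLO_iff, step, hcb, hab, hac]
  by_cases hsoc_ac : (f P).1 a c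
  · left
    apply wd_decisive hX hP hI hac
    intro Q hQ1 hQ2
    have agree : ∀ i, (P i).1 a c ↔ (Q i).1 a c := by
      intro i
      by_cases h1 : i ∈ D1
      · simp [hPdef, h1, mkSLO_iff, step, hba, hca, hcb, hQ1 i h1]
      · have hqi := (Q i).asymm' (hQ2 i h1)
        by_cases h2 : i ∈ D2 <;>
          simp [hPdef, h1, h2, mkSLO_iff, step, hcb, hab, hac, hca, hqi]
    exact (hI P Q a c agree).mp hsoc_ac
  · right
    have hsoc_ca : (f P).1 c a := (f P).total' hac hsoc_ac
    have hsoc_ba : (f P).1 b a := (f P).trans' hsoc_bc hsoc_ca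
    apply wd_decisive hX hP hI hba
    intro Q hQ1 hQ2
    have agree : ∀ i, (P i).1 b a ↔ (Q i).1 b a := by
      intro i
      by_cases h2 : i ∈ D2
      · have h1 : i ∉ D1 := fun h' => hdisj i h' h2
        simp [hPdef, h1, h2, mkSLO_iff, step, hcb, hab, hac, hQ1 i h2]
      · have hqi := (Q i).asymm' (hQ2 i h2)
        by_cases h1 : i ∈ D1 <;>
          simp [hPdef, h1, h2, mkSLO_iff, step, hba, hca, hcb, hab, hac, hbc, hqi]
    exact (hI P Q b a agree).mp hsoc_ba

end Aux

theorem exists_decisive_singleton {X ι : Type*} [Fintype X] [Fintype ι] [Nonempty ι]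
    (hX : 3 ≤ Fintype.card X)
    (f : (ι → SLO X) → SLO X) (hP : Pareto f) (hI : IIA f) :
    ∃ i : ι, Decisive f ({i} : Set ι) := by
  classical
  have main : ∀ s : Finset ι, s.Nonempty → Decisive f ↑s →
      ∃ i : ι, Decisive f ({i} : Set ι) := by
    intro s
    induction s using Finset.strongInduction with
    | _ s ih =>
      intro hne hdec
      obtain ⟨i, hi⟩ := hne
      by_cases hrest : (s.erase i).Nonempty
      · have hdisj : ∀ j, j ∈ ({i} : Set ι) → j ∉ (↑(s.erase i) : Set ι) := by
          intro j hj
          simp only [Set.mem_singleton_iff] at hj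
          subst hj
          simp
        have hunion : ({i} : Set ι) ∪ ↑(s.erase i) = ↑s := by
          ext j
          simp only [Set.mem_union, Set.mem_singleton_iff, Finset.coe_erase,
            Set.mem_diff, Finset.mem_coe, Set.mem_singleton_iff]
          constructor
          · rintro (rfl | ⟨hj, _⟩)
            · exact hi
            · exact hj
          · intro hj
            by_cases hji : j = i
            · exact Or.inl hji
            · exact Or.inr ⟨hj, hji⟩
        rcases split_dec hX hP hI hdisj (by rw [hunion]; exact hdec) with h | h
        · exact ⟨i, h⟩
        · exact ih (s.erase i) (Finset.erase_ssubset hi) hrest h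
      · have hs : s = {i} := by
          rcases Finset.eq_empty_or_nonempty (s.erase i) with h | h
          · have := (Finset.erase_eq_empty_iff s i).mp h
            rcases this with h' | h'
            · exact absurd (h' ▸ hi) (by simp)
            · exact h'
          · exact absurd h hrest
        exact ⟨i, by rwa [hs, Finset.coe_singleton] at hdec⟩
  have huniv : Decisive f (↑(Finset.univ : Finset ι)) := by
    rw [Finset.coe_univ]
    intro a b hab P h
    exact hP P a b (fun i => h i trivial)
  exact main Finset.univ Finset.univ_nonempty huniv
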